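/- Let (X,d) be a metric space and x₀ ∈ X. Then X is injective if and only if for every R ∈ [0,∞) the closed ball B(x₀,R) = { y ∈ X : d(x₀,y) ≤ R } (with the induced metric) is injective. -/

import Mathlib

universe u v w

/-- A metric space `X` is injective if for every pair of metric spaces `A`, `B`, every
isometric embedding `ι : A → B` and every `1`-Lipschitz map `f : A → X`, there is a
`1`-Lipschitz map `g : B → X` with `g ∘ ι = f`. -/
def IsInjectiveMetricSpace (X : Type u) [MetricSpace X] : Prop :=
  ∀ ⦃A : Type v⦄ ⦃B : Type w⦄ [MetricSpace A] [MetricSpace B],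
    ∀ ι : A → B, Isometry ι → ∀ f : A → X, LipschitzWith 1 f →
      ∃ g : B → X, LipschitzWith 1 g ∧ ∀ a, g (ι a) = f a

namespace InjAux

open Metric Set

/-- Hyperconvexity (for families indexed by types in the same universe). -/
def Hyperconvex (X : Type u) [MetricSpace X] : Prop :=
  ∀ (κ : Type u) (c : κ → X) (r : κ → ℝ),
    (∀ i j, dist (c i) (c j) ≤ r i + r j) → ∃ p : X, ∀ i, dist p (c i) ≤ r i

section Basic

variable {Y : Type u} [MetricSpace Y]

theorem radius_nonneg {κ : Type u} {c : κ → Y} {r : κ → ℝ}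
    (hp : ∀ i j, dist (c i) (c j) ≤ r i + r j) (i : κ) : 0 ≤ r i := by
  have h := hp i i
  rw [dist_self] at h
  linarith

/-- Hyperconvex spaces are injective: Zorn's lemma argument using graphs of
partial 1-Lipschitz extensions. -/
theorem hyperconvex_isInjective (hY : Hyperconvex Y) :
    IsInjectiveMetricSpace.{u, u, u} Y := by
  intro A B _ _ j hj f hf
  classical
  set S : Set (Set (B × Y)) :=
    {F | (∀ a, (j a, f a) ∈ F) ∧ ∀ p ∈ F, ∀ q ∈ F, dist p.2 q.2 ≤ dist p.1 q.1} with hSdef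
  have hbase : (Set.range fun a => (j a, f a)) ∈ S := by
    constructor
    · exact fun a => ⟨a, rfl⟩
    · rintro p ⟨a, rfl⟩ q ⟨a', rfl⟩
      calc dist (f a) (f a') ≤ 1 * dist a a' := hf.dist_le_mul a a'
        _ = dist a a' := one_mul _
        _ = dist (j a) (j a') := (hj.dist_eq a a').symm
  have hchain : ∀ ch ⊆ S, IsChain (· ⊆ ·) ch → ch.Nonempty →
      ∃ ub ∈ S, ∀ s ∈ ch, s ⊆ ub := by
    intro ch hchS hch hchne
    refine ⟨⋃₀ ch, ⟨?_, ?_⟩, fun s hs => subset_sUnion_of_mem hs⟩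
    · obtain ⟨s, hs⟩ := hchne
      exact fun a => ⟨s, hs, (hchS hs).1 a⟩
    · rintro p ⟨s, hs, hps⟩ q ⟨t, ht, hqt⟩
      rcases hch.total hs ht with hst | hts
      · exact (hchS ht).2 p (hst hps) q hqt
      · exact (hchS hs).2 p hps q (hts hqt)
  obtain ⟨M, -, hMS, hMmax⟩ :
      ∃ M, (Set.range fun a => (j a, f a)) ⊆ M ∧ M ∈ S ∧ ∀ F ∈ S, M ⊆ F → F = M := by
    obtain ⟨M, hsub, hmax⟩ := zorn_subset_nonempty S hchain _ hbase
    exact ⟨M, hsub, hmax.1, fun F hF hMF => hmax.eq_of_ge hF hMF⟩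
  have htot : ∀ b : B, ∃ x : Y, (b, x) ∈ M := by
    by_contra hcon
    push_neg at hcon
    obtain ⟨b, hb⟩ := hcon
    have hMcomp : ∀ m m' : ↥M, dist m.1.2 m'.1.2 ≤ dist b m.1.1 + dist b m'.1.1 := by
      intro m m'
      have h1 := hMS.2 _ m.2 _ m'.2
      have h2 := dist_triangle m.1.1 b m'.1.1
      have h3 := dist_comm m.1.1 b
      linarith
    obtain ⟨x, hx⟩ := hY (↥M) (fun m => m.1.2) (fun m => dist b m.1.1) hMcomp
    have hMS' : insert (b, x) M ∈ S := by
      constructor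
      · exact fun a => Or.inr (hMS.1 a)
      · rintro p (hp | hp) q (hq | hq)
        · subst hp; subst hq; simp
        · subst hp
          simpa using hx ⟨q, hq⟩
        · subst hq
          have h5 := hx ⟨p, hp⟩
          rw [dist_comm p.2 x, dist_comm p.1 b]
          simpa using h5
        · exact hMS.2 p hp q hq
    have heq := hMmax _ hMS' (subset_insert _ _)
    have : (b, x) ∈ M := by rw [← heq]; exact Or.inl rfl
    exact hb x this
  choose g hg using htot
  refine ⟨g, ?_, ?_⟩
  · apply LipschitzWith.of_dist_le_mul
    intro b b'
    rw [NNReal.coe_one, one_mul]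
    exact hMS.2 _ (hg b) _ (hg b')
  · intro a
    have h1 := hMS.2 _ (hg (j a)) _ (hMS.1 a)
    rw [dist_self] at h1
    exact dist_le_zero.1 h1

/-- Injective (nonempty) spaces are hyperconvex: one-point extension construction. -/
theorem isInjective_hyperconvex (hne : Nonempty Y)
    (hY : IsInjectiveMetricSpace.{u, u, u} Y) : Hyperconvex Y := by
  intro κ c r hpair
  rcases isEmpty_or_nonempty κ with hκ | hκ
  · exact ⟨hne.some, fun i => (hκ.false i).elim⟩
  classical
  set A := ↥(Set.range c) with hA
  set ρ : A → ℝ := fun a => ⨅ i, (r i + dist a.1 (c i)) with hρ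
  have hbdd : ∀ a : A, BddBelow (Set.range fun i => r i + dist a.1 (c i)) := by
    intro a
    refine ⟨0, ?_⟩
    rintro x ⟨i, rfl⟩
    exact add_nonneg (radius_nonneg hpair i) dist_nonneg
  have hρ_le : ∀ (a : A) (i : κ), ρ a ≤ r i + dist a.1 (c i) := fun a i => ciInf_le (hbdd a) i
  have hρ_nonneg : ∀ a : A, 0 ≤ ρ a := fun a =>
    le_ciInf fun i => add_nonneg (radius_nonneg hpair i) dist_nonneg
  have hρ_lip : ∀ a b : A, ρ a ≤ ρ b + dist a.1 b.1 := by
    intro a b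
    have h1 : ρ a - dist a.1 b.1 ≤ ρ b := by
      apply le_ciInf
      intro i
      have h2 := hρ_le a i
      have h3 := dist_triangle a.1 b.1 (c i)
      linarith
    linarith
  have hρ_pair : ∀ a b : A, dist a.1 b.1 ≤ ρ a + ρ b := by
    intro a b
    have h1 : dist a.1 b.1 - ρ b ≤ ρ a := by
      apply le_ciInf
      intro i
      have h2 : dist a.1 b.1 - (r i + dist a.1 (c i)) ≤ ρ b := by
        apply le_ciInf
        intro k
        have t1 := dist_triangle a.1 (c i) b.1
        have t2 := dist_triangle (c i) (c k) b.1
        have t3 := hpair i k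
        have t4 := dist_comm (c k) b.1
        linarith
      linarith
    linarith
  have hρc : ∀ i : κ, ρ ⟨c i, ⟨i, rfl⟩⟩ ≤ r i := by
    intro i
    have := hρ_le ⟨c i, ⟨i, rfl⟩⟩ i
    simpa using this
  by_cases hdeg : ∃ a : A, ρ a ≤ 0
  · obtain ⟨a, ha⟩ := hdeg
    refine ⟨a.1, fun i => ?_⟩
    apply le_of_forall_pos_le_add
    intro ε hε
    have hlt : ρ a < ε := lt_of_le_of_lt ha hε
    rw [hρ] at hlt
    obtain ⟨k, hk⟩ := exists_lt_of_ciInf_lt hlt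
    have t1 := dist_triangle a.1 (c k) (c i)
    have t2 := hpair k i
    have t3 := dist_comm a.1 (c k)
    have t4 := dist_nonneg (x := a.1) (y := c k)
    have t5 := radius_nonneg hpair k
    linarith
  · push_neg at hdeg
    -- build one-point extension `Option A`
    let dd : Option A → Option A → ℝ := fun x y =>
      match x, y with
      | none, none => 0
      | none, some b => ρ b
      | some a, none => ρ a
      | some a, some b => dist a b
    have hsub : ∀ a b : A, dist a b = dist a.1 b.1 := fun a b => Subtype.dist_eq a b
    letI : MetricSpace (Option A) :=
      { dist := dd
        dist_self := by
          rintro (_ | a)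
          · rfl
          · exact dist_self a
        dist_comm := by
          rintro (_ | a) (_ | b)
          · rfl
          · rfl
          · rfl
          · exact dist_comm a b
        dist_triangle := by
          rintro (_ | a) (_ | b) (_ | e)
          · show (0 : ℝ) ≤ 0 + 0; norm_num
          · show ρ e ≤ 0 + ρ e; norm_num
          · show (0 : ℝ) ≤ ρ b + ρ b
            have := hρ_nonneg b; linarith
          · show ρ e ≤ ρ b + dist b e
            rw [hsub]
            have := hρ_lip e b
            have := dist_comm b.1 e.1
            linarith
          · show ρ a ≤ ρ a + 0; norm_num
          · show dist a e ≤ ρ a + ρ e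
            rw [hsub]; exact hρ_pair a e
          · show ρ a ≤ dist a b + ρ b
            rw [hsub]
            have h6 := hρ_lip a b
            linarith
          · show dist a e ≤ dist a b + dist b e
            exact dist_triangle a b e
        eq_of_dist_eq_zero := by
          rintro (_ | a) (_ | b) h
          · rfl
          · exact absurd h (ne_of_lt (hdeg b)).symm
          · exact absurd h (ne_of_lt (hdeg a)).symm
          · exact congrArg _ (eq_of_dist_eq_zero h) }
    have hisom : Isometry (fun a : A => (some a : Option A)) :=
      Isometry.of_dist_eq fun a b => rfl
    have hlip : LipschitzWith 1 (fun a : A => (a.1 : Y)) := by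
      apply LipschitzWith.of_dist_le_mul
      intro a b
      rw [NNReal.coe_one, one_mul, hsub]
    obtain ⟨g, hglip, hgj⟩ := hY (fun a : A => (some a : Option A)) hisom _ hlip
    refine ⟨g none, fun i => ?_⟩
    have h1 : dist (g none) (g (some ⟨c i, ⟨i, rfl⟩⟩)) ≤ 1 * dist (none : Option A) (some ⟨c i, ⟨i, rfl⟩⟩) :=
      hglip.dist_le_mul _ _
    simp only [NNReal.coe_one, one_mul] at h1
    have h2 : dist (none : Option A) (some (⟨c i, ⟨i, rfl⟩⟩ : A)) = ρ ⟨c i, ⟨i, rfl⟩⟩ := rfl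
    have h3 : g (some (⟨c i, ⟨i, rfl⟩⟩ : A)) = c i := hgj ⟨c i, ⟨i, rfl⟩⟩
    rw [h2, h3] at h1
    exact h1.trans (hρc i)

end Basic

section Balls

variable {X : Type u} [MetricSpace X]

/-- Closed balls of a hyperconvex space are hyperconvex. -/
theorem hyperconvex_closedBall (hX : Hyperconvex X) (y₀ : X) (R : ℝ) (hR : 0 ≤ R) :
    Hyperconvex (Metric.closedBall y₀ R) := by
  intro κ c r hpair
  have hcomp : ∀ i k : Option κ,
      dist (Option.elim i y₀ (fun k => (c k).1)) (Option.elim k y₀ (fun k => (c k).1)) ≤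
        Option.elim i R (fun k => r k) + Option.elim k R (fun k => r k) := by
    rintro (_ | i) (_ | k)
    · show dist y₀ y₀ ≤ R + R
      rw [dist_self]; linarith
    · show dist y₀ (c k).1 ≤ R + r k
      have h1 : dist (c k).1 y₀ ≤ R := mem_closedBall.1 (c k).2
      have h2 := radius_nonneg hpair k
      rw [dist_comm]
      linarith
    · show dist (c i).1 y₀ ≤ r i + R
      have h1 : dist (c i).1 y₀ ≤ R := mem_closedBall.1 (c i).2
      have h2 := radius_nonneg hpair i
      linarith
    · show dist (c i).1 (c k).1 ≤ r i + r k
      have h3 := hpair i k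
      rwa [Subtype.dist_eq] at h3
  obtain ⟨p, hp⟩ := hX (Option κ)
      (fun i => Option.elim i y₀ (fun k => (c k).1))
      (fun i => Option.elim i R (fun k => r k)) hcomp
  have hpball : p ∈ closedBall y₀ R := by
    have h4 := hp none
    simpa [mem_closedBall] using h4
  refine ⟨⟨p, hpball⟩, fun i => ?_⟩
  have h5 := hp (some i)
  simpa [Subtype.dist_eq] using h5

/-- A convenient repackaging of hyperconvexity of all closed balls around `x₀`. -/
def BallHyp (X : Type u) [MetricSpace X] (x₀ : X) : Prop :=
  ∀ R : ℝ, 0 ≤ R → ∀ (κ : Type u) (c : κ → X) (r : κ → ℝ),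
    (∀ i, dist (c i) x₀ ≤ R) → (∀ i j, dist (c i) (c j) ≤ r i + r j) →
      ∃ p : X, dist p x₀ ≤ R ∧ ∀ i, dist p (c i) ≤ r i

theorem ballHyp_of (x₀ : X)
    (hb : ∀ R : ℝ, 0 ≤ R → Hyperconvex (Metric.closedBall x₀ R)) : BallHyp X x₀ := by
  intro R hR κ c r hc hpair
  have hcomp : ∀ i k : κ, dist (⟨c i, mem_closedBall.2 (hc i)⟩ : Metric.closedBall x₀ R)
      (⟨c k, mem_closedBall.2 (hc k)⟩ : Metric.closedBall x₀ R) ≤ r i + r k := by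
    intro i k
    show dist (c i) (c k) ≤ r i + r k
    exact hpair i k
  obtain ⟨p, hp⟩ := hb R hR κ (fun i => ⟨c i, mem_closedBall.2 (hc i)⟩) r hcomp
  refine ⟨p.1, mem_closedBall.1 p.2, fun i => ?_⟩
  have h1 := hp i
  rwa [Subtype.dist_eq] at h1

/-- The key theorem: if all closed balls around `x₀` are hyperconvex,
then `X` is hyperconvex. -/
theorem hyperconvex_of_ballHyp (x₀ : X) (hb : BallHyp X x₀) : Hyperconvex X := by
  intro κ c r hpair
  rcases isEmpty_or_nonempty κ with hκ | hκ
  · exact ⟨x₀, fun i => (hκ.false i).elim⟩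
  classical
  set h : X → ℝ := fun u => ⨅ i, (r i + dist u (c i)) with hh
  have hbdd : ∀ u : X, BddBelow (Set.range fun i => r i + dist u (c i)) := by
    intro u
    refine ⟨0, ?_⟩
    rintro x ⟨i, rfl⟩
    exact add_nonneg (radius_nonneg hpair i) dist_nonneg
  have h_le : ∀ (u : X) (i : κ), h u ≤ r i + dist u (c i) := fun u i => ciInf_le (hbdd u) i
  have h_nonneg : ∀ u : X, 0 ≤ h u := fun u =>
    le_ciInf fun i => add_nonneg (radius_nonneg hpair i) dist_nonneg
  have h_pair : ∀ u v : X, dist u v ≤ h u + h v := by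
    intro u v
    have h1 : dist u v - h v ≤ h u := by
      apply le_ciInf
      intro i
      have h2 : dist u v - (r i + dist u (c i)) ≤ h v := by
        apply le_ciInf
        intro k
        have t1 := dist_triangle u (c i) v
        have t2 := dist_triangle (c i) (c k) v
        have t3 := hpair i k
        have t4 := dist_comm (c k) v
        linarith
      linarith
    linarith
  have h_c : ∀ i : κ, h (c i) ≤ r i := by
    intro i
    have := h_le (c i) i
    simpa using this
  set r₀ : ℝ := h x₀ with hr₀def
  have hr₀ : 0 ≤ r₀ := h_nonneg x₀
  set G : ℝ → Set X :=
    fun S => {y | dist y x₀ ≤ r₀ ∧ ∀ u : X, dist u x₀ ≤ S → dist y u ≤ h u} with hG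
  -- every `G S` is nonempty
  have hGne : ∀ S : ℝ, (G S).Nonempty := by
    intro S
    have hcen : ∀ i : Option {u : X // dist u x₀ ≤ S},
        dist (Option.elim i x₀ (fun u => u.1)) x₀ ≤ max S r₀ := by
      rintro (_ | u)
      · show dist x₀ x₀ ≤ max S r₀
        rw [dist_self]
        exact le_max_of_le_right hr₀
      · show dist (u : X) x₀ ≤ max S r₀
        exact le_trans u.2 (le_max_left _ _)
    have hcomp : ∀ i k : Option {u : X // dist u x₀ ≤ S},
        dist (Option.elim i x₀ (fun u => u.1)) (Option.elim k x₀ (fun u => u.1)) ≤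
          Option.elim i r₀ (fun u => h u.1) + Option.elim k r₀ (fun u => h u.1) := by
      rintro (_ | i) (_ | k)
      · show dist x₀ x₀ ≤ r₀ + r₀
        rw [dist_self]; linarith
      · show dist x₀ (k : X) ≤ r₀ + h (k : X)
        have := h_pair x₀ (k : X)
        linarith
      · show dist (i : X) x₀ ≤ h (i : X) + r₀
        have := h_pair (i : X) x₀
        linarith
      · show dist (i : X) (k : X) ≤ h (i : X) + h (k : X)
        exact h_pair _ _
    obtain ⟨p, hp0, hp⟩ := hb (max S r₀) (le_max_of_le_right hr₀)
      (Option {u : X // dist u x₀ ≤ S})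
      (fun i => Option.elim i x₀ (fun u => u.1))
      (fun i => Option.elim i r₀ (fun u => h u.1)) hcen hcomp
    refine ⟨p, ?_, ?_⟩
    · have h6 := hp none
      simpa using h6
    · intro u hu
      have h7 := hp (some ⟨u, hu⟩)
      simpa using h7
  have hGmono : ∀ {S S' : ℝ}, S ≤ S' → G S' ⊆ G S := by
    intro S S' hss y hy
    exact ⟨hy.1, fun u hu => hy.2 u (hu.trans hss)⟩
  -- the "circumradius-type" function
  set rr : X → ℝ → ℝ := fun z S => sSup ((fun a => dist z a) '' G S) with hrr
  have hrr_bdd : ∀ (z : X) (S : ℝ), BddAbove ((fun a => dist z a) '' G S) := by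
    intro z S
    refine ⟨dist z x₀ + r₀, ?_⟩
    rintro x ⟨a, ha, rfl⟩
    have t1 := dist_triangle z x₀ a
    have t2 : dist x₀ a ≤ r₀ := by
      have := ha.1
      rw [dist_comm]
      linarith
    linarith
  have hrr_ge : ∀ (z : X) {S : ℝ} {a : X}, a ∈ G S → dist z a ≤ rr z S := by
    intro z S a ha
    exact le_csSup (hrr_bdd z S) ⟨a, ha, rfl⟩
  have hrr_le : ∀ {z : X} {S B : ℝ}, (∀ a ∈ G S, dist z a ≤ B) → rr z S ≤ B := by
    intro z S B hB
    apply csSup_le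
    · obtain ⟨a, ha⟩ := hGne S
      exact ⟨dist z a, a, ha, rfl⟩
    · rintro x ⟨a, ha, rfl⟩
      exact hB a ha
  -- main application of a single ball: the final point
  have key : ∀ q q' : {q : X × ℝ // dist q.1 x₀ ≤ 4 * r₀}, q.1.2 ≤ q'.1.2 →
      dist q.1.1 q'.1.1 ≤ rr q.1.1 q.1.2 + rr q'.1.1 q'.1.2 := by
    intro q q' hle
    obtain ⟨a, ha⟩ := hGne q'.1.2
    have ha' : a ∈ G q.1.2 := hGmono hle ha
    have t1 := dist_triangle q.1.1 a q'.1.1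
    have t2 := hrr_ge q.1.1 ha'
    have t3 : dist q'.1.1 a ≤ rr q'.1.1 q'.1.2 := hrr_ge q'.1.1 ha
    have t4 := dist_comm a q'.1.1
    linarith
  have hcompQ : ∀ q q' : {q : X × ℝ // dist q.1 x₀ ≤ 4 * r₀},
      dist q.1.1 q'.1.1 ≤ rr q.1.1 q.1.2 + rr q'.1.1 q'.1.2 := by
    intro q q'
    rcases le_total q.1.2 q'.1.2 with hle | hle
    · exact key q q' hle
    · have h8 := key q' q hle
      rw [dist_comm]
      linarith
  obtain ⟨p, hpZ, hp⟩ := hb (4 * r₀) (by linarith) ({q : X × ℝ // dist q.1 x₀ ≤ 4 * r₀})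
      (fun q => q.1.1) (fun q => rr q.1.1 q.1.2) (fun q => q.2) hcompQ
  -- p is in the small ball
  have hpK : dist p x₀ ≤ r₀ := by
    have hx₀Z : dist (x₀ : X) x₀ ≤ 4 * r₀ := by
      rw [dist_self]; linarith
    have h1 := hp ⟨(x₀, 0), hx₀Z⟩
    refine h1.trans (hrr_le ?_)
    intro a ha
    rw [dist_comm]
    exact ha.1
  -- the main estimate
  have hmain : ∀ u : X, dist p u ≤ h u := by
    intro u
    by_cases hu : dist u x₀ ≤ 4 * r₀
    · have h1 := hp ⟨(u, dist u x₀), hu⟩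
      refine h1.trans (hrr_le ?_)
      intro a ha
      have := ha.2 u le_rfl
      rwa [dist_comm]
    · push_neg at hu
      set D : ℝ := dist p u with hD
      have hD3 : 3 * r₀ < D := by
        have t1 := dist_triangle u p x₀
        have t2 := dist_comm u p
        linarith
      set L : ℝ := D - 3 * r₀ with hL
      set S : ℝ := dist u x₀ with hS
      have hfa : ∀ a ∈ G S, dist a u ≤ h u := fun a ha => ha.2 u le_rfl
      have hfa2 : ∀ a ∈ G S, L + r₀ ≤ dist a u := by
        intro a ha
        have t1 := dist_triangle p a u
        have t2 := dist_triangle p x₀ a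
        have t3 : dist a x₀ ≤ r₀ := ha.1
        have t4 := dist_comm x₀ a
        linarith
      have hfa3 : ∀ a ∈ G S, dist a x₀ ≤ r₀ := fun a ha => ha.1
      set cenf : Option (Option (Option ↥(G S))) → X :=
        fun i => Option.elim i u (fun i' => Option.elim i' p
          (fun i'' => Option.elim i'' x₀ (fun a => a.1))) with hcenf
      set radf : Option (Option (Option ↥(G S))) → ℝ :=
        fun i => Option.elim i L (fun i' => Option.elim i' (3 * r₀)
          (fun i'' => Option.elim i'' (4 * r₀) (fun a => dist a.1 u - L))) with hradf
      have hcen : ∀ i, dist (cenf i) x₀ ≤ S := by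
        rintro (_ | (_ | (_ | a)))
        · show dist u x₀ ≤ S
          exact le_of_eq hS.symm
        · show dist p x₀ ≤ S
          linarith
        · show dist x₀ x₀ ≤ S
          rw [dist_self]; linarith
        · show dist a.1 x₀ ≤ S
          have := hfa3 a.1 a.2
          linarith
      have hcomp : ∀ i k, dist (cenf i) (cenf k) ≤ radf i + radf k := by
        have hub : dist u x₀ ≤ D + r₀ := by
          have t1 := dist_triangle u p x₀
          have t2 := dist_comm u p
          linarith
        rintro (_ | (_ | (_ | a))) (_ | (_ | (_ | a')))
        · show dist u u ≤ L + L
          rw [dist_self]; linarith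
        · show dist u p ≤ L + 3 * r₀
          have := dist_comm u p
          linarith
        · show dist u x₀ ≤ L + 4 * r₀
          linarith
        · show dist u a'.1 ≤ L + (dist a'.1 u - L)
          have := dist_comm u a'.1
          linarith
        · show dist p u ≤ 3 * r₀ + L
          linarith
        · show dist p p ≤ 3 * r₀ + 3 * r₀
          rw [dist_self]; linarith
        · show dist p x₀ ≤ 3 * r₀ + 4 * r₀
          linarith
        · show dist p a'.1 ≤ 3 * r₀ + (dist a'.1 u - L)
          have t1 := dist_triangle p x₀ a'.1
          have t2 := hfa2 a'.1 a'.2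
          have t3 := hfa3 a'.1 a'.2
          have t4 := dist_comm x₀ a'.1
          linarith
        · show dist x₀ u ≤ 4 * r₀ + L
          have := dist_comm x₀ u
          linarith
        · show dist x₀ p ≤ 4 * r₀ + 3 * r₀
          have := dist_comm x₀ p
          linarith
        · show dist x₀ x₀ ≤ 4 * r₀ + 4 * r₀
          rw [dist_self]; linarith
        · show dist x₀ a'.1 ≤ 4 * r₀ + (dist a'.1 u - L)
          have t1 := hfa2 a'.1 a'.2
          have t2 := hfa3 a'.1 a'.2
          have t3 := dist_comm x₀ a'.1
          linarith
        · show dist a.1 u ≤ (dist a.1 u - L) + L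
          linarith
        · show dist a.1 p ≤ (dist a.1 u - L) + 3 * r₀
          have t1 := dist_triangle p x₀ a.1
          have t2 := hfa2 a.1 a.2
          have t3 := hfa3 a.1 a.2
          have t4 := dist_comm x₀ a.1
          have t5 := dist_comm a.1 p
          linarith
        · show dist a.1 x₀ ≤ (dist a.1 u - L) + 4 * r₀
          have t1 := hfa2 a.1 a.2
          have t2 := hfa3 a.1 a.2
          linarith
        · show dist a.1 a'.1 ≤ (dist a.1 u - L) + (dist a'.1 u - L)
          have t1 := dist_triangle a.1 x₀ a'.1
          have t2 := hfa2 a.1 a.2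
          have t3 := hfa2 a'.1 a'.2
          have t4 := hfa3 a.1 a.2
          have t5 := hfa3 a'.1 a'.2
          have t6 := dist_comm x₀ a'.1
          linarith
      obtain ⟨z, hz0, hz⟩ := hb S (by linarith) (Option (Option (Option ↥(G S))))
        cenf radf hcen hcomp
      have hzZ : dist z x₀ ≤ 4 * r₀ := by
        have := hz (some (some none))
        exact this
      have hpz := hp ⟨(z, S), hzZ⟩
      have hzu : dist z u ≤ L := by
        have := hz none
        exact this
      have hrrz : rr z S ≤ h u - L := by
        apply hrr_le
        intro a ha
        have t1 : dist z a ≤ dist a u - L := by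
          have := hz (some (some (some ⟨a, ha⟩)))
          exact this
        have t2 := hfa a ha
        linarith
      have hlow : D - L ≤ dist p z := by
        have := dist_triangle p z u
        linarith
      have := hpz.trans hrrz
      -- D - L ≤ dist p z ≤ rr z S ≤ h u - L
      linarith
  exact ⟨p, fun i => (hmain (c i)).trans (h_c i)⟩

end Balls

end InjAux

/-- A metric space `X` is injective if and only if every closed ball `B(x₀, R)`, `R ≥ 0`,
with the induced metric, is injective. -/
theorem injective_iff_closedBall_injective {X : Type u} [MetricSpace X] (x₀ : X) :
    IsInjectiveMetricSpace.{u, u, u} X ↔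
      ∀ R : ℝ, 0 ≤ R →
        IsInjectiveMetricSpace.{u, u, u} (Metric.closedBall x₀ R) := by
  constructor
  · intro hX R hR
    have hH : InjAux.Hyperconvex X := InjAux.isInjective_hyperconvex ⟨x₀⟩ hX
    exact InjAux.hyperconvex_isInjective (InjAux.hyperconvex_closedBall hH x₀ R hR)
  · intro hball
    have hb : InjAux.BallHyp X x₀ := by
      apply InjAux.ballHyp_of
      intro R hR
      exact InjAux.isInjective_hyperconvex
        ⟨⟨x₀, Metric.mem_closedBall_self hR⟩⟩ (hball R hR)
    exact InjAux.hyperconvex_isInjective (InjAux.hyperconvex_of_ballHyp x₀ hb)
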